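/- For every discrete log-concave random variable X supported on ℕ and every t ≥ 0, P(X > t) ≤ e·exp(−2t/(5·(E[X]+1))). In particular, if E[X] ≥ 1, then P(X > t) ≤ e·exp(−t/(5·E[X])). -/

import Mathlib

/-- The support of `f : ℤ → ℝ` is contiguous. -/
def ContigSupportInt (f : ℤ → ℝ) : Prop :=
  ∀ a b c : ℤ, a ≤ b → b ≤ c → 0 < f a → 0 < f c → 0 < f b

/-- `p` is the p.m.f. of a log-concave probability measure on `ℤ`. -/
def IsLogConcavePMF (p : ℤ → ℝ) : Prop :=
  (∀ n, 0 ≤ p n) ∧ Summable p ∧ (∑' n : ℤ, p n) = 1 ∧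
    (∀ n : ℤ, p (n - 1) * p (n + 1) ≤ p n ^ 2) ∧ ContigSupportInt p

/-- `S ⊆ ℤ` is an interval. -/
def IsIntervalZ (S : Set ℤ) : Prop :=
  ∀ a b c : ℤ, a ≤ b → b ≤ c → a ∈ S → c ∈ S → b ∈ S

/-- The measure of a set `S ⊆ ℤ` under the p.m.f. `p`. -/
noncomputable def measOf (p : ℤ → ℝ) (S : Set ℤ) : ℝ :=
  ∑' n : ℤ, S.indicator p n

/-- The tail probability `P(X ≥ n)`. -/
noncomputable def tailQ (p : ℤ → ℝ) (n : ℤ) : ℝ :=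
  measOf p { m : ℤ | n ≤ m }

section Aux

variable {p : ℤ → ℝ}

lemma lc_pair (hp : IsLogConcavePMF p) :
    ∀ n m : ℤ, n ≤ m → p n * p (m + 1) ≤ p (n + 1) * p m := by
  obtain ⟨h0, -, -, hlc, hcon⟩ := hp
  intro n m hnm
  refine Int.le_induction (motive := fun m _ => p n * p (m + 1) ≤ p (n + 1) * p m) ?_ ?_ m hnm
  · exact (mul_comm (p n) (p (n + 1))).le
  · intro m hnm ih
    rcases le_or_gt (p n) 0 with hn | hn
    · have hn0 : p n = 0 := le_antisymm hn (h0 n)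
      rw [hn0, zero_mul]; exact mul_nonneg (h0 _) (h0 _)
    rcases le_or_gt (p (m + 1 + 1)) 0 with hm | hm
    · have hm0 : p (m + 1 + 1) = 0 := le_antisymm hm (h0 _)
      rw [hm0, mul_zero]; exact mul_nonneg (h0 _) (h0 _)
    have hpm : 0 < p m := hcon n m (m + 1 + 1) hnm (by linarith) hn hm
    have hpm1 : 0 < p (m + 1) := hcon n (m + 1) (m + 1 + 1) (by linarith) (by linarith) hn hm
    have h2 := hlc (m + 1)
    rw [add_sub_cancel_right] at h2
    nlinarith [mul_le_mul_of_nonneg_left h2 hn.le,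
      mul_le_mul_of_nonneg_right ih hpm1.le, hpm, mul_pos hn hm]

lemma tailQ_rec (hs : Summable p) (n : ℤ) : tailQ p n = p n + tailQ p (n + 1) := by
  unfold tailQ measOf
  have hfe : ({ m : ℤ | n ≤ m }.indicator p)
      = fun m => (if m = n then p n else 0) + { m : ℤ | n + 1 ≤ m }.indicator p m := by
    funext m
    simp only [Set.indicator_apply, Set.mem_setOf_eq]
    by_cases h : m = n
    · subst h; simp
    · rcases lt_or_ge m n with hlt | hle
      · rw [if_neg (not_le.mpr hlt), if_neg h, if_neg (by omega)]; ring
      · rw [if_pos hle, if_neg h, if_pos (by omega)]; ring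
  rw [hfe, Summable.tsum_add (hasSum_ite_eq n (p n)).summable (hs.indicator _), tsum_ite_eq]

lemma tailQ_nonneg (hnn : ∀ n, 0 ≤ p n) (n : ℤ) : 0 ≤ tailQ p n :=
  tsum_nonneg fun m => Set.indicator_nonneg (fun i _ => hnn i) m

lemma tailQ_le_one (hnn : ∀ n, 0 ≤ p n) (hs : Summable p) (htot : (∑' n : ℤ, p n) = 1)
    (n : ℤ) : tailQ p n ≤ 1 := by
  have := Summable.tsum_le_tsum (f := ({ m : ℤ | n ≤ m }.indicator p)) (g := p)
    (fun m => Set.indicator_le_self' (fun i _ => hnn i) m) (hs.indicator _) hs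
  simpa [tailQ, measOf, htot] using this

lemma tailQ_zero (hnn : ∀ n, 0 ≤ p n) (hsupp : ∀ n : ℤ, 0 < p n → 0 ≤ n)
    (htot : (∑' n : ℤ, p n) = 1) : tailQ p 0 = 1 := by
  have hind : ({ m : ℤ | (0:ℤ) ≤ m }.indicator p) = p := by
    funext m
    by_cases h : (0:ℤ) ≤ m
    · simp [Set.indicator_apply, h]
    · have : p m = 0 := by
        by_contra hne
        exact h (hsupp m (lt_of_le_of_ne (hnn m) (Ne.symm hne)))
      simp [Set.indicator_apply, h, this]
  rw [tailQ, measOf, hind, htot]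

lemma tailQ_lc (hp : IsLogConcavePMF p) (n : ℤ) :
    tailQ p (n - 1) * tailQ p (n + 1) ≤ tailQ p n ^ 2 := by
  have hnn := hp.1
  have hs := hp.2.1
  have key : p (n - 1) * tailQ p (n + 1) ≤ p n * tailQ p n := by
    have e1 : p (n - 1) * tailQ p (n + 1)
        = ∑' m : ℤ, p (n - 1) * ({ m' : ℤ | n + 1 ≤ m' }.indicator p m) := by
      rw [tsum_mul_left]; rfl
    have e2 : p n * tailQ p n
        = ∑' m : ℤ, p n * ({ m' : ℤ | n ≤ m' }.indicator p (m - 1)) := by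
      rw [tsum_mul_left]
      congr 1
      exact ((Equiv.subRight (1 : ℤ)).tsum_eq ({ m' : ℤ | n ≤ m' }.indicator p)).symm
    rw [e1, e2]
    have s1 : Summable (fun m : ℤ => p (n - 1) * ({ m' : ℤ | n + 1 ≤ m' }.indicator p m)) :=
      (hs.indicator _).mul_left _
    have s2' : Summable (fun m : ℤ => ({ m' : ℤ | n ≤ m' }.indicator p (m - 1))) := by
      have := ((Equiv.subRight (1 : ℤ)).summable_iff
        (f := { m' : ℤ | n ≤ m' }.indicator p)).mpr (hs.indicator _)
      simpa [Function.comp_def, Equiv.subRight_apply] using this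
    have s2 := s2'.mul_left (p n)
    refine Summable.tsum_le_tsum (fun m => ?_) s1 s2
    by_cases h : n + 1 ≤ m
    · have h1 : n ≤ m - 1 := by omega
      rw [Set.indicator_of_mem (show m ∈ { m' : ℤ | n + 1 ≤ m' } from h),
        Set.indicator_of_mem (show m - 1 ∈ { m' : ℤ | n ≤ m' } from h1)]
      have := lc_pair hp (n - 1) (m - 1) (by omega)
      simpa using this
    · rw [Set.indicator_of_notMem (show m ∉ { m' : ℤ | n + 1 ≤ m' } from h), mul_zero]
      exact mul_nonneg (hnn n) (Set.indicator_nonneg (fun i _ => hnn i) _)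
  have r1 : tailQ p (n - 1) = p (n - 1) + tailQ p n := by
    have := tailQ_rec hs (n - 1)
    rwa [sub_add_cancel] at this
  have r2 : tailQ p n = p n + tailQ p (n + 1) := tailQ_rec hs n
  have hq2 : tailQ p n ^ 2 = p n * tailQ p n + tailQ p n * tailQ p (n + 1) := by
    rw [r2]; ring
  calc tailQ p (n - 1) * tailQ p (n + 1)
      = p (n - 1) * tailQ p (n + 1) + tailQ p n * tailQ p (n + 1) := by rw [r1]; ring
    _ ≤ p n * tailQ p n + tailQ p n * tailQ p (n + 1) := by linarith [key]
    _ = tailQ p n ^ 2 := hq2.symm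

lemma chord_sum (d : ℕ → ℝ) (c : ℕ) (hd : ∀ i j, i ≤ j → j < c → d j ≤ d i) :
    ∀ b, b ≤ c → (b : ℝ) * ∑ j ∈ Finset.range c, d j ≤ (c : ℝ) * ∑ j ∈ Finset.range b, d j := by
  intro b hb
  rcases Nat.eq_zero_or_pos b with rfl | hb1
  · simp
  · have hsplit : ∑ j ∈ Finset.range b, d j + ∑ j ∈ Finset.Ico b c, d j
        = ∑ j ∈ Finset.range c, d j := Finset.sum_range_add_sum_Ico d hb
    have h1 : (b : ℝ) * d (b - 1) ≤ ∑ j ∈ Finset.range b, d j := by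
      have := Finset.card_nsmul_le_sum (Finset.range b) d (d (b - 1))
        (fun j hj => by
          have hj' := Finset.mem_range.mp hj
          exact hd j (b - 1) (by omega) (by omega))
      simpa [nsmul_eq_mul] using this
    have h2 : ∑ j ∈ Finset.Ico b c, d j ≤ ((c : ℝ) - b) * d (b - 1) := by
      have := Finset.sum_le_card_nsmul (Finset.Ico b c) d (d (b - 1))
        (fun j hj => by
          have hj' := Finset.mem_Ico.mp hj
          exact hd (b - 1) j (by omega) (by omega))
      rw [Nat.card_Ico, nsmul_eq_mul] at this
      have hcast : ((c - b : ℕ) : ℝ) = (c : ℝ) - b := by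
        push_cast [Nat.cast_sub hb]; ring
      rwa [hcast] at this
    have hbc : (b : ℝ) ≤ c := by exact_mod_cast hb
    have hb0 : (0 : ℝ) ≤ b := by positivity
    nlinarith [mul_le_mul_of_nonneg_left h2 hb0,
      mul_le_mul_of_nonneg_left h1 (sub_nonneg.mpr hbc), hsplit]

lemma pow_chord (R : ℕ → ℝ) (hR0 : R 0 = 1) (hRnn : ∀ n, 0 ≤ R n)
    (hanti : ∀ n, R (n + 1) ≤ R n) (hlc : ∀ n, R n * R (n + 2) ≤ R (n + 1) ^ 2)
    {b c : ℕ} (hbc : b ≤ c) : R c ^ b ≤ R b ^ c := by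
  have hmono : ∀ i j, i ≤ j → R j ≤ R i := by
    intro i j h
    induction j, h using Nat.le_induction with
    | base => exact le_refl _
    | succ j hj ih => exact (hanti j).trans ih
  rcases eq_or_lt_of_le (hRnn c) with hc0 | hcpos
  · rcases Nat.eq_zero_or_pos b with rfl | hbpos
    · simp [hR0]
    · rw [← hc0, zero_pow (by omega)]
      exact pow_nonneg (hRnn b) c
  · have hpos : ∀ j, j ≤ c → 0 < R j := fun j hj => lt_of_lt_of_le hcpos (hmono j c hj)
    set d : ℕ → ℝ := fun j => Real.log (R (j + 1)) - Real.log (R j) with hd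
    have hlog : ∀ n, Real.log (R n) = ∑ j ∈ Finset.range n, d j := by
      intro n
      rw [hd, Finset.sum_range_sub (fun j => Real.log (R j)), hR0, Real.log_one, sub_zero]
    have hdstep : ∀ i, i + 1 < c → d (i + 1) ≤ d i := by
      intro i hi
      have p0 : 0 < R i := hpos i (by omega)
      have p1 : 0 < R (i + 1) := hpos (i + 1) (by omega)
      have p2 : 0 < R (i + 2) := hpos (i + 2) (by omega)
      have hle : Real.log (R i * R (i + 2)) ≤ Real.log (R (i + 1) ^ 2) :=
        Real.log_le_log (by positivity) (hlc i)
      rw [Real.log_mul (ne_of_gt p0) (ne_of_gt p2), Real.log_pow] at hle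
      simp only [hd]
      push_cast at hle
      linarith
    have hdanti : ∀ i j, i ≤ j → j < c → d j ≤ d i := by
      intro i j hij
      induction j, hij using Nat.le_induction with
      | base => intro _; exact le_refl _
      | succ j hj ih =>
        intro hjc
        exact (hdstep j hjc).trans (ih (by omega))
    have key := chord_sum d c hdanti b hbc
    rw [← hlog c, ← hlog b] at key
    have hb' : 0 < R b := hpos b hbc
    have hlogs : Real.log (R c ^ b) ≤ Real.log (R b ^ c) := by
      rw [Real.log_pow, Real.log_pow]
      exact key
    exact (Real.log_le_log_iff (pow_pos hcpos b) (pow_pos hb' c)).mp hlogs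

end Aux

set_option maxHeartbeats 2000000 in
/-- Large deviation inequality for discrete log-concave random variables supported on
`ℕ`: for all `t ≥ 0`, `P(X > t) ≤ e·exp(−2t/(5·(E[X]+1)))`; in particular, if
`E[X] ≥ 1`, then `P(X > t) ≤ e·exp(−t/(5·E[X]))`. -/
theorem large_deviation_mean (p : ℤ → ℝ) (hp : IsLogConcavePMF p)
    (hsupp : ∀ n : ℤ, 0 < p n → 0 ≤ n) :
    (∀ t : ℝ, 0 ≤ t →
      measOf p { n : ℤ | t < (n : ℝ) } ≤
        Real.exp 1 * Real.exp (-(2 * t / (5 * ((∑' n : ℤ, (n : ℝ) * p n) + 1))))) ∧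
    (1 ≤ ∑' n : ℤ, (n : ℝ) * p n → ∀ t : ℝ, 0 ≤ t →
      measOf p { n : ℤ | t < (n : ℝ) } ≤
        Real.exp 1 * Real.exp (-(t / (5 * ∑' n : ℤ, (n : ℝ) * p n)))) := by
  obtain ⟨hnn, hsum, htot, hlcp, hcon⟩ := hp
  have hp' : IsLogConcavePMF p := ⟨hnn, hsum, htot, hlcp, hcon⟩
  have hneg : ∀ n : ℤ, n < 0 → p n = 0 := by
    intro n hn
    by_contra hne
    have := hsupp n (lt_of_le_of_ne (hnn n) (Ne.symm hne))
    omega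
  obtain ⟨μ, hμdef⟩ : ∃ μ0 : ℝ, μ0 = ∑' n : ℤ, (n : ℝ) * p n := ⟨_, rfl⟩
  rw [← hμdef]
  -- R : tail probabilities at natural indices
  set R : ℕ → ℝ := fun j => tailQ p (j : ℤ) with hRdef
  have hR0 : R 0 = 1 := by
    simpa [hRdef] using tailQ_zero hnn hsupp htot
  have hRnn : ∀ n, 0 ≤ R n := fun n => tailQ_nonneg hnn _
  have hRrec : ∀ n : ℕ, R n = p (n : ℤ) + R (n + 1) := by
    intro n
    have := tailQ_rec hsum (n : ℤ)
    simpa [hRdef, Int.natCast_succ] using this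
  have hRanti : ∀ n, R (n + 1) ≤ R n := by
    intro n
    rw [hRrec n]
    linarith [hnn (n : ℤ)]
  have hRlc : ∀ n, R n * R (n + 2) ≤ R (n + 1) ^ 2 := by
    intro n
    have := tailQ_lc hp' ((n : ℤ) + 1)
    have e1 : ((n : ℤ) + 1 - 1) = (n : ℤ) := by ring
    have e2 : ((n : ℤ) + 1 + 1) = ((n : ℤ) + 2) := by ring
    rw [e1, e2] at this
    simpa [hRdef, Int.natCast_succ, add_assoc] using this
  have hRle_one : ∀ n, R n ≤ 1 := fun n => tailQ_le_one hnn hsum htot _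
  -- partial sums of p over ℕ tend to 1
  have hpsum_nat : Summable (fun i : ℕ => p (i : ℤ)) :=
    hsum.comp_injective (fun a b h => by exact_mod_cast h)
  have htot_nat : ∑' i : ℕ, p (i : ℤ) = 1 := by
    rw [← htot]
    apply Function.Injective.tsum_eq (fun a b h => by exact_mod_cast h)
    intro x hx
    simp only [Set.mem_range] at hx ⊢
    by_contra hxr
    rcases lt_or_ge x 0 with h | h
    · exact hx (hneg x h)
    · exact hxr ⟨x.toNat, Int.toNat_of_nonneg h⟩
  have hRpartial : ∀ k : ℕ, R k = 1 - ∑ i ∈ Finset.range k, p (i : ℤ) := by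
    intro k
    induction k with
    | zero => simp [hR0]
    | succ k ih =>
      rw [Finset.sum_range_succ]
      have := hRrec k
      linarith [this, ih]
  -- existence of k₀ with R k₀ ≤ 1/2
  obtain ⟨k₀, hk₀1, hk₀⟩ : ∃ k : ℕ, 1 ≤ k ∧ R k ≤ 1 / 2 := by
    have htend : Filter.Tendsto (fun k => ∑ i ∈ Finset.range k, p (i : ℤ))
        Filter.atTop (nhds 1) := by
      have := hpsum_nat.hasSum.tendsto_sum_nat
      rwa [htot_nat] at this
    have hev := htend.eventually (eventually_ge_nhds (show (1:ℝ)/2 < 1 by norm_num))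
    obtain ⟨k, hk⟩ := hev.exists
    refine ⟨k + 1, by omega, ?_⟩
    have h1 : R (k + 1) ≤ R k := hRanti k
    have h2 : R k ≤ 1 / 2 := by
      rw [hRpartial k]; linarith
    linarith
  have hk₀pos : (0:ℝ) < (k₀ : ℝ) := by exact_mod_cast hk₀1
  -- geometric decay of R
  set r : ℝ := (1 / 2 : ℝ) ^ ((k₀ : ℝ)⁻¹) with hrdef
  have hr0 : 0 < r := Real.rpow_pos_of_pos (by norm_num) _
  have hr1 : r < 1 := Real.rpow_lt_one (by norm_num) (by norm_num) (inv_pos.mpr hk₀pos)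
  have hQgeo : ∀ n : ℕ, k₀ ≤ n → R n ≤ r ^ n := by
    intro n hn
    have h1 : R n ^ k₀ ≤ R k₀ ^ n := pow_chord R hR0 hRnn hRanti hRlc hn
    have h2 : R k₀ ^ n ≤ (1 / 2 : ℝ) ^ n := pow_le_pow_left₀ (hRnn k₀) hk₀ n
    have h3 : R n ^ k₀ ≤ (1 / 2 : ℝ) ^ n := h1.trans h2
    have hcalc : R n = ((R n ^ k₀ : ℝ)) ^ ((k₀ : ℝ)⁻¹) := by
      rw [← Real.rpow_natCast (R n) k₀, ← Real.rpow_mul (hRnn n),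
        mul_inv_cancel₀ (ne_of_gt hk₀pos), Real.rpow_one]
    rw [hcalc]
    calc ((R n ^ k₀ : ℝ)) ^ ((k₀ : ℝ)⁻¹)
        ≤ ((1 / 2 : ℝ) ^ n) ^ ((k₀ : ℝ)⁻¹) :=
          Real.rpow_le_rpow (pow_nonneg (hRnn n) k₀) h3 (by positivity)
      _ = r ^ n := by
          rw [← Real.rpow_natCast (1/2 : ℝ) n, ← Real.rpow_mul (by norm_num),
            mul_comm, Real.rpow_mul (by norm_num), Real.rpow_natCast]
  have hp_le_R : ∀ n : ℕ, p (n : ℤ) ≤ R n := by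
    intro n
    rw [hRrec n]
    linarith [hRnn (n + 1)]
  -- summability of the mean series
  have hsummean_nat : Summable (fun n : ℕ => (n : ℝ) * p (n : ℤ)) := by
    rw [← summable_nat_add_iff k₀]
    have hmaj : Summable (fun n : ℕ => ((n : ℝ) + k₀) * r ^ (n + k₀)) := by
      have h1 : Summable (fun n : ℕ => (n : ℝ) ^ 1 * r ^ n) :=
        summable_pow_mul_geometric_of_norm_lt_one 1
          (by rw [Real.norm_eq_abs, abs_of_pos hr0]; exact hr1)
      have h2 : Summable (fun n : ℕ => r ^ n) := summable_geometric_of_lt_one hr0.le hr1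
      have heq : (fun n : ℕ => ((n : ℝ) + k₀) * r ^ (n + k₀))
          = fun n : ℕ => r ^ k₀ * ((n : ℝ) ^ 1 * r ^ n) + ((k₀ : ℝ) * r ^ k₀) * r ^ n := by
        funext n; rw [pow_add]; ring
      rw [heq]
      exact (h1.mul_left _).add (h2.mul_left _)
    apply Summable.of_nonneg_of_le _ _ hmaj
    · intro n; exact mul_nonneg (by positivity) (hnn _)
    · intro n
      apply mul_le_mul _ _ (hnn _) (by positivity)
      · push_cast; linarith
      · exact (hp_le_R (n + k₀)).trans (hQgeo (n + k₀) (by omega))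
  have hsummean : Summable (fun n : ℤ => (n : ℝ) * p n) := by
    apply Summable.of_nat_of_neg_add_one hsummean_nat
    have hzero : (fun n : ℕ => ((-(n + 1) : ℤ) : ℝ) * p (-(n + 1))) = fun _ : ℕ => (0:ℝ) := by
      funext n
      rw [hneg (-(n + 1)) (by omega), mul_zero]
    rw [hzero]
    exact summable_zero
  -- partial tail sums bounded by the mean
  have hSk : ∀ k : ℕ, ∑ j ∈ Finset.range k, tailQ p ((j : ℤ) + 1) ≤ μ := by
    have hw : ∀ k : ℕ, Summable (fun n : ℤ => ((max 0 (min n (k : ℤ)) : ℤ) : ℝ) * p n) := by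
      intro k
      apply Summable.of_norm_bounded (g := fun n => (k : ℝ) * p n) (hsum.mul_left _)
      intro n
      rw [Real.norm_eq_abs, abs_of_nonneg (mul_nonneg (by exact_mod_cast le_max_left 0 _) (hnn n))]
      apply mul_le_mul_of_nonneg_right _ (hnn n)
      exact_mod_cast (by omega : max 0 (min n (k : ℤ)) ≤ (k : ℤ))
    have hident : ∀ k : ℕ, (∑ j ∈ Finset.range k, tailQ p ((j : ℤ) + 1))
        = ∑' n : ℤ, ((max 0 (min n (k : ℤ)) : ℤ) : ℝ) * p n := by
      intro k
      induction k with
      | zero =>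
        simp only [Finset.range_zero, Finset.sum_empty, Nat.cast_zero]
        symm
        have : ∀ n : ℤ, ((max 0 (min n (0 : ℤ)) : ℤ) : ℝ) * p n = 0 := by
          intro n
          have : max 0 (min n (0:ℤ)) = 0 := by omega
          rw [this]; simp
        rw [tsum_congr this]; exact tsum_zero
      | succ k ih =>
        rw [Finset.sum_range_succ, ih]
        have hterm : ∀ n : ℤ, ((max 0 (min n ((k : ℤ) + 1)) : ℤ) : ℝ) * p n
            = ((max 0 (min n (k : ℤ)) : ℤ) : ℝ) * p n
              + { m : ℤ | (k : ℤ) + 1 ≤ m }.indicator p n := by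
          intro n
          simp only [Set.indicator_apply, Set.mem_setOf_eq]
          split_ifs with h
          · have he : max 0 (min n ((k : ℤ) + 1)) = max 0 (min n (k : ℤ)) + 1 := by omega
            rw [he]; push_cast; ring
          · have he : max 0 (min n ((k : ℤ) + 1)) = max 0 (min n (k : ℤ)) := by omega
            rw [he]; ring
        have : (∑' n : ℤ, ((max 0 (min n ((k:ℤ) + 1)) : ℤ) : ℝ) * p n)
            = (∑' n : ℤ, ((max 0 (min n (k:ℤ)) : ℤ) : ℝ) * p n)
              + ∑' n : ℤ, { m : ℤ | (k : ℤ) + 1 ≤ m }.indicator p n := by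
          rw [← Summable.tsum_add (hw k) (hsum.indicator _)]
          exact tsum_congr hterm
        have hcast : (((k + 1 : ℕ)) : ℤ) = (k : ℤ) + 1 := by push_cast; ring
        rw [hcast, this]
        rfl
    intro k
    rw [hident k, hμdef]
    apply Summable.tsum_le_tsum _ (hw k) hsummean
    intro n
    rcases lt_or_ge n 0 with h | h
    · rw [hneg n h]; simp
    · apply mul_le_mul_of_nonneg_right _ (hnn n)
      exact_mod_cast (by omega : max 0 (min n (k : ℤ)) ≤ n)
  have hμ0 : 0 ≤ μ := by
    rw [hμdef]
    apply tsum_nonneg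
    intro n
    rcases lt_or_ge n 0 with h | h
    · rw [hneg n h]; simp
    · exact mul_nonneg (by exact_mod_cast h) (hnn n)
  -- set up constants
  set M : ℝ := μ + 1 with hMdef
  have hM1 : 1 ≤ M := by linarith
  have hMpos : 0 < M := by linarith
  set α : ℝ := 2 / (5 * M) with hαdef
  have hα0 : 0 < α := by positivity
  have hαM : α * (5 * M / 2) = 1 := by
    rw [hαdef]; field_simp
  have hαle : α ≤ 2 / 5 := by
    rw [hαdef, div_le_div_iff₀ (by positivity) (by norm_num)]
    nlinarith
  set k : ℕ := ⌈5 * M / 2⌉₊ with hkdef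
  have hk_ge : 5 * M / 2 ≤ (k : ℝ) := Nat.le_ceil _
  have hk_lt : (k : ℝ) < 5 * M / 2 + 1 := Nat.ceil_lt_add_one (by positivity)
  have hk1 : 1 ≤ k := by
    have : 0 < k := Nat.ceil_pos.mpr (by positivity)
    omega
  have hαk : 1 ≤ α * k := by
    calc (1:ℝ) = α * (5 * M / 2) := hαM.symm
      _ ≤ α * k := by
          apply mul_le_mul_of_nonneg_left hk_ge hα0.le
  -- step 1 : R k ≤ exp (-(α k))
  have step1 : R k ≤ Real.exp (-(α * k)) := by
    by_contra hcon'
    push_neg at hcon'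
    have hgt : ∀ j : ℕ, 1 ≤ j → j ≤ k → Real.exp (-(α * j)) < R j := by
      intro j h1 h2
      have hc : R k ^ j ≤ R j ^ k := pow_chord R hR0 hRnn hRanti hRlc h2
      have hlt : (Real.exp (-(α * j))) ^ k < R j ^ k := by
        have e : (Real.exp (-(α * j))) ^ k = (Real.exp (-(α * k))) ^ j := by
          rw [← Real.exp_nat_mul, ← Real.exp_nat_mul]
          congr 1; ring
        rw [e]
        exact lt_of_lt_of_le (pow_lt_pow_left₀ hcon' (Real.exp_nonneg _) (by omega)) hc
      exact lt_of_pow_lt_pow_left₀ k (hRnn j) hlt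
    have hsum_lt : ∑ j ∈ Finset.range k, Real.exp (-(α * ((j : ℝ) + 1)))
        < ∑ j ∈ Finset.range k, tailQ p ((j : ℤ) + 1) := by
      apply Finset.sum_lt_sum_of_nonempty (by simp [Finset.nonempty_range_iff]; omega)
      intro j hj
      have hjk := Finset.mem_range.mp hj
      have hlt := hgt (j + 1) (by omega) (by omega)
      have ecast1 : ((j + 1 : ℕ) : ℝ) = (j : ℝ) + 1 := by push_cast; ring
      rw [ecast1] at hlt
      have hR : R (j + 1) = tailQ p ((j : ℤ) + 1) := by
        simp only [hRdef]
        norm_cast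
      rw [← hR]
      exact hlt
    set x : ℝ := Real.exp (-α) with hxdef
    have hx0 : 0 < x := Real.exp_pos _
    have hx1 : x < 1 := Real.exp_lt_one_iff.mpr (by linarith)
    have hx_ne : x ≠ 1 := ne_of_lt hx1
    have hx_ge : 1 - α ≤ x := by
      have := Real.add_one_le_exp (-α)
      rw [hxdef]; linarith
    have hxk : x ^ k ≤ 1 / 2 := by
      have hpow : x ^ k = Real.exp (-(α * k)) := by
        rw [hxdef, ← Real.exp_nat_mul]; congr 1; ring
      rw [hpow]
      have h1 : -(α * k) ≤ -1 := by linarith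
      calc Real.exp (-(α * k)) ≤ Real.exp (-1) := Real.exp_le_exp.mpr h1
        _ ≤ 1 / 2 := by
            rw [Real.exp_neg]
            have h2 : (2:ℝ) ≤ Real.exp 1 := by
              have := Real.add_one_le_exp 1; linarith
            have := inv_anti₀ (by norm_num : (0:ℝ) < 2) h2
            linarith
    have hx_exp_eq : ∀ j : ℕ, Real.exp (-(α * ((j : ℝ) + 1))) = x ^ (j + 1) := by
      intro j
      rw [hxdef, ← Real.exp_nat_mul]
      congr 1; push_cast; ring
    have hgeom : ∑ j ∈ Finset.range k, x ^ (j + 1) = x * ((x ^ k - 1) / (x - 1)) := by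
      rw [← geom_sum_eq hx_ne k, Finset.mul_sum]
      apply Finset.sum_congr rfl
      intro j _
      rw [pow_succ']
    have hd0 : 0 < 1 - x := by linarith
    have hfrac : x * ((x ^ k - 1) / (x - 1)) = x * (1 - x ^ k) / (1 - x) := by
      have h1 : x - 1 ≠ 0 := by intro hc; rw [sub_eq_zero] at hc; exact hx_ne hc
      have h2 : (1 : ℝ) - x ≠ 0 := ne_of_gt hd0
      field_simp
      ring
    have hgeom_lb : ((1 - α) * (1 / 2)) / α ≤ x * ((x ^ k - 1) / (x - 1)) := by
      rw [hfrac]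
      apply div_le_div₀ (by nlinarith) (by nlinarith) hd0 (by linarith)
    have hval : ((1 - α) * (1 / 2)) / α = 5 * M / 4 - 1 / 2 := by
      rw [hαdef]; field_simp; ring
    have hfinal : μ < μ := by
      calc μ = M - 1 := by rw [hMdef]; ring
        _ ≤ 5 * M / 4 - 1 / 2 := by linarith
        _ = ((1 - α) * (1 / 2)) / α := hval.symm
        _ ≤ x * ((x ^ k - 1) / (x - 1)) := hgeom_lb
        _ = ∑ j ∈ Finset.range k, x ^ (j + 1) := hgeom.symm
        _ = ∑ j ∈ Finset.range k, Real.exp (-(α * ((j : ℝ) + 1))) := by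
            apply Finset.sum_congr rfl
            intro j _
            exact (hx_exp_eq j).symm
        _ < ∑ j ∈ Finset.range k, tailQ p ((j : ℤ) + 1) := hsum_lt
        _ ≤ μ := hSk k
    exact lt_irrefl _ hfinal
  -- step 2 : R n ≤ e * exp(-(α n)) for all n
  have hexp1 : (1:ℝ) ≤ Real.exp 1 := by
    have := Real.add_one_le_exp 1; linarith
  have step2 : ∀ n : ℕ, R n ≤ Real.exp 1 * Real.exp (-(α * n)) := by
    intro n
    rcases lt_or_ge n k with h | h
    · have hn1 : (n : ℝ) + 1 ≤ k := by exact_mod_cast h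
      have hαn : α * n ≤ 1 := by nlinarith [hαM, hα0]
      calc R n ≤ 1 := hRle_one n
        _ ≤ Real.exp 1 * Real.exp (-(α * n)) := by
            rw [← Real.exp_add]
            have : (0:ℝ) ≤ 1 + -(α * n) := by linarith
            calc (1:ℝ) = Real.exp 0 := Real.exp_zero.symm
              _ ≤ _ := Real.exp_le_exp.mpr this
    · have hc : R n ^ k ≤ R k ^ n := pow_chord R hR0 hRnn hRanti hRlc h
      have h2 : R k ^ n ≤ (Real.exp (-(α * k))) ^ n := pow_le_pow_left₀ (hRnn k) step1 n
      have h3 : (Real.exp (-(α * k))) ^ n = (Real.exp (-(α * n))) ^ k := by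
        rw [← Real.exp_nat_mul, ← Real.exp_nat_mul]
        congr 1; ring
      have h4 : R n ≤ Real.exp (-(α * n)) := by
        apply le_of_pow_le_pow_left₀ (by omega : k ≠ 0) (Real.exp_nonneg _)
        calc R n ^ k ≤ R k ^ n := hc
          _ ≤ (Real.exp (-(α * k))) ^ n := h2
          _ = (Real.exp (-(α * n))) ^ k := h3
      calc R n ≤ Real.exp (-(α * n)) := h4
        _ ≤ Real.exp 1 * Real.exp (-(α * n)) :=
            le_mul_of_one_le_left (Real.exp_nonneg _) hexp1
  -- main bound
  have main : ∀ t : ℝ, 0 ≤ t →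
      measOf p { n : ℤ | t < (n : ℝ) } ≤
        Real.exp 1 * Real.exp (-(2 * t / (5 * (μ + 1)))) := by
    intro t ht
    have hfl : (0:ℤ) ≤ ⌊t⌋ := Int.floor_nonneg.mpr ht
    set m : ℕ := (⌊t⌋ + 1).toNat with hmdef
    have hm2 : ((m : ℤ)) = ⌊t⌋ + 1 := Int.toNat_of_nonneg (by omega)
    have hmeas : measOf p { n : ℤ | t < (n : ℝ) } = R m := by
      have hseteq : { n : ℤ | t < (n : ℝ) } = { n : ℤ | (m : ℤ) ≤ n } := by
        ext n
        simp only [Set.mem_setOf_eq, hm2]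
        rw [Int.add_one_le_iff, Int.floor_lt]
      rw [hseteq]
      rfl
    have hmt : t < (m : ℝ) := by
      have : ((m : ℕ) : ℝ) = ((⌊t⌋ : ℝ) + 1) := by exact_mod_cast hm2
      rw [this]
      exact Int.lt_floor_add_one t
    have hb := step2 m
    have harg : -(α * m) ≤ -(α * t) := by nlinarith
    have hargeq : α * t = 2 * t / (5 * (μ + 1)) := by
      rw [hαdef, hMdef]; ring
    calc measOf p { n : ℤ | t < (n : ℝ) } = R m := hmeas
      _ ≤ Real.exp 1 * Real.exp (-(α * m)) := hb
      _ ≤ Real.exp 1 * Real.exp (-(α * t)) := by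
          apply mul_le_mul_of_nonneg_left (Real.exp_le_exp.mpr harg) (Real.exp_nonneg _)
      _ = Real.exp 1 * Real.exp (-(2 * t / (5 * (μ + 1)))) := by rw [hargeq]
  refine ⟨main, ?_⟩
  intro hμ1 t ht
  refine (main t ht).trans ?_
  apply mul_le_mul_of_nonneg_left _ (Real.exp_nonneg _)
  apply Real.exp_le_exp.mpr
  have hμpos : (0:ℝ) < μ := by linarith
  have : t / (5 * μ) ≤ 2 * t / (5 * (μ + 1)) := by
    rw [div_le_div_iff₀ (by positivity) (by positivity)]
    nlinarith
  linarith
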